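/- Count of full contractions bound: in the overlap ⟨↓|↑⟩ for a rotated column of length L₁ ≥ 2 (L₁ even), each of the 2L₁ annihilation operators can be contracted with at most 4 creation operators (its adjacent faces), so the number of nonvanishing full contractions, and hence |⟨↓|↑⟩|, is at most 4^{2L₁}; moreover for L₁ = 2 each face has only 3 adjacent faces among the creation operators, so |⟨↓|↑⟩| ≤ 3^{2L₁} < 4^{2L₁}. -/

import Mathlib

open MvPolynomial

/-!
Bosonic Fock space over the edge set `E`, modelled as `MvPolynomial E ℂ`:
the monomial `X^α` represents the state `∏ (b_e†)^(α e) |0⟩`, and the Fock space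
inner product is `⟨X^α, X^β⟩ = α! δ_{αβ}` (so that `b_e† = X_e ·` and `b_e = ∂_e`
satisfy the canonical commutation relations).
-/

/-- The bosonic Fock space inner product on `MvPolynomial E ℂ`
(antilinear in the first argument). -/
noncomputable def wInner {E : Type*} [DecidableEq E] (p q : MvPolynomial E ℂ) : ℂ :=
  ∑ α ∈ p.support ∪ q.support,
    (∏ e ∈ α.support, (Nat.factorial (α e) : ℂ)) *
      (starRingEnd ℂ) (MvPolynomial.coeff α p) * MvPolynomial.coeff α q

/-- The faces of a closed column of length `L`: at each height `i : ZMod L` there are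
four faces `(i,0) = aᵢ`, `(i,1) = bᵢ`, `(i,2) = cᵢ`, `(i,3) = dᵢ` arranged in a ring. -/
abbrev ColFace (L : ℕ) := ZMod L × ZMod 4

/-- Adjacency of column faces (faces sharing exactly one edge): around the ring
`aᵢ - bᵢ - cᵢ - dᵢ - aᵢ` at the same height, and between consecutive heights for the
same letter. -/
def colAdj {L : ℕ} (f g : ColFace L) : Prop :=
  (f.1 = g.1 ∧ (g.2 = f.2 + 1 ∨ f.2 = g.2 + 1)) ∨
  (f.2 = g.2 ∧ (g.1 = f.1 + 1 ∨ f.1 = g.1 + 1))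

instance {L : ℕ} (f g : ColFace L) : Decidable (colAdj f g) := by
  unfold colAdj; infer_instance

/-- The faces occupied in the state `|↑⟩`: `aᵢ, cᵢ` for odd `i` and `bᵢ, dᵢ`
for even `i`. (`|↓⟩` occupies the complementary pattern.) -/
def upFace {L : ℕ} (f : ColFace L) : Prop :=
  (Odd f.1.val ∧ (f.2 = 0 ∨ f.2 = 2)) ∨ (Even f.1.val ∧ (f.2 = 1 ∨ f.2 = 3))

instance {L : ℕ} (f : ColFace L) : Decidable (upFace f) := by
  unfold upFace; infer_instance

/-- The face creation operator applied to the vacuum: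
`b_f† |0⟩ = ∑ e σ_f(e) b_e† |0⟩` for the signed (±1) indicator `σ f` of the four
edges of the face `f`. -/
noncomputable def facePoly {E : Type*} [Fintype E] {L : ℕ}
    (σ : ColFace L → E → ℤ) (f : ColFace L) : MvPolynomial E ℂ :=
  ∑ e : E, (σ f e : ℂ) • X e

/-- The state `|↑⟩ = ∏_{i odd} aᵢ† cᵢ† ∏_{i even} bᵢ† dᵢ† |0⟩`. -/
noncomputable def upState {E : Type*} [Fintype E] {L : ℕ} [NeZero L]
    (σ : ColFace L → E → ℤ) : MvPolynomial E ℂ :=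
  ∏ f ∈ Finset.univ.filter (fun f : ColFace L => upFace f), facePoly σ f

/-- The state `|↓⟩ = ∏_{i odd} bᵢ† dᵢ† ∏_{i even} aᵢ† cᵢ† |0⟩`. -/
noncomputable def downState {E : Type*} [Fintype E] {L : ℕ} [NeZero L]
    (σ : ColFace L → E → ℤ) : MvPolynomial E ℂ :=
  ∏ f ∈ Finset.univ.filter (fun f : ColFace L => ¬ upFace f), facePoly σ f

namespace WAux
variable {E : Type*} [DecidableEq E]

noncomputable def W (α : E →₀ ℕ) : ℂ := ∏ e ∈ α.support, (Nat.factorial (α e) : ℂ)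

lemma wInner_eq_sum (p q : MvPolynomial E ℂ) (s : Finset (E →₀ ℕ))
    (hs : p.support ∪ q.support ⊆ s) :
    wInner p q = ∑ α ∈ s, W α * (starRingEnd ℂ) (coeff α p) * coeff α q := by
  rw [wInner]
  exact Finset.sum_subset hs (fun α _ hα => by
    rcases Finset.notMem_union.mp hα with ⟨h1, _⟩
    rw [MvPolynomial.notMem_support_iff.mp h1]
    simp)

lemma wInner_zero_right (p : MvPolynomial E ℂ) : wInner p 0 = 0 := by
  simp [wInner]

lemma wInner_zero_left (q : MvPolynomial E ℂ) : wInner 0 q = 0 := by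
  simp [wInner]

lemma wInner_add_right (p q r : MvPolynomial E ℂ) :
    wInner p (q + r) = wInner p q + wInner p r := by
  set s := p.support ∪ (q + r).support ∪ q.support ∪ r.support with hs
  have sub : ∀ u v : Finset (E →₀ ℕ), u ∪ v ⊆ s → True := fun _ _ _ => trivial
  have h1 : p.support ∪ (q + r).support ⊆ s := by
    intro x hx; simp only [hs, Finset.mem_union] at hx ⊢; tauto
  have h2 : p.support ∪ q.support ⊆ s := by
    intro x hx; simp only [hs, Finset.mem_union] at hx ⊢; tauto
  have h3 : p.support ∪ r.support ⊆ s := by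
    intro x hx; simp only [hs, Finset.mem_union] at hx ⊢; tauto
  rw [wInner_eq_sum p (q + r) s h1, wInner_eq_sum p q s h2, wInner_eq_sum p r s h3,
    ← Finset.sum_add_distrib]
  refine Finset.sum_congr rfl fun α _ => ?_
  rw [coeff_add]; ring

lemma wInner_add_left (p q r : MvPolynomial E ℂ) :
    wInner (p + q) r = wInner p r + wInner q r := by
  set s := (p + q).support ∪ r.support ∪ p.support ∪ q.support with hs
  have h1 : (p + q).support ∪ r.support ⊆ s := by
    intro x hx; simp only [hs, Finset.mem_union] at hx ⊢; tauto
  have h2 : p.support ∪ r.support ⊆ s := by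
    intro x hx; simp only [hs, Finset.mem_union] at hx ⊢; tauto
  have h3 : q.support ∪ r.support ⊆ s := by
    intro x hx; simp only [hs, Finset.mem_union] at hx ⊢; tauto
  rw [wInner_eq_sum (p + q) r s h1, wInner_eq_sum p r s h2, wInner_eq_sum q r s h3,
    ← Finset.sum_add_distrib]
  refine Finset.sum_congr rfl fun α _ => ?_
  rw [coeff_add, map_add]; ring

lemma wInner_smul_right (c : ℂ) (p q : MvPolynomial E ℂ) :
    wInner p (c • q) = c * wInner p q := by
  rw [wInner_eq_sum p (c • q) (p.support ∪ q.support)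
        (Finset.union_subset_union le_rfl (Finsupp.support_smul)),
      wInner_eq_sum p q (p.support ∪ q.support) le_rfl, Finset.mul_sum]
  refine Finset.sum_congr rfl fun α _ => ?_
  rw [coeff_smul, smul_eq_mul]; ring

lemma wInner_smul_left (c : ℂ) (p q : MvPolynomial E ℂ) :
    wInner (c • p) q = (starRingEnd ℂ) c * wInner p q := by
  rw [wInner_eq_sum (c • p) q (p.support ∪ q.support)
        (Finset.union_subset_union (Finsupp.support_smul) le_rfl),
      wInner_eq_sum p q (p.support ∪ q.support) le_rfl, Finset.mul_sum]
  refine Finset.sum_congr rfl fun α _ => ?_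
  rw [coeff_smul, smul_eq_mul, map_mul]; ring

lemma wInner_sum_right {ι : Type*} (p : MvPolynomial E ℂ) (s : Finset ι)
    (q : ι → MvPolynomial E ℂ) :
    wInner p (∑ i ∈ s, q i) = ∑ i ∈ s, wInner p (q i) := by
  classical
  induction s using Finset.induction_on with
  | empty => simp [wInner_zero_right]
  | insert _ _ h ih => rw [Finset.sum_insert h, Finset.sum_insert h, wInner_add_right, ih]

lemma wInner_sum_left {ι : Type*} (q : MvPolynomial E ℂ) (s : Finset ι)
    (p : ι → MvPolynomial E ℂ) :
    wInner (∑ i ∈ s, p i) q = ∑ i ∈ s, wInner (p i) q := by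
  classical
  induction s using Finset.induction_on with
  | empty => simp [wInner_zero_left]
  | insert _ _ h ih => rw [Finset.sum_insert h, Finset.sum_insert h, wInner_add_left, ih]

lemma wInner_monomial (α β : E →₀ ℕ) (c d : ℂ) :
    wInner (monomial α c) (monomial β d) =
      if α = β then W α * (starRingEnd ℂ) c * d else 0 := by
  have hs : (monomial α c : MvPolynomial E ℂ).support ∪ (monomial β d).support ⊆ {α, β} := by
    refine Finset.union_subset ?_ ?_
    · refine (MvPolynomial.support_monomial ..).trans_subset ?_
      split <;> simp
    · refine (MvPolynomial.support_monomial ..).trans_subset ?_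
      split <;> simp
  rw [wInner_eq_sum _ _ _ hs]
  by_cases h : α = β
  · subst h
    simp [coeff_monomial]
  · rw [Finset.sum_pair h]
    simp [coeff_monomial, h, Ne.symm h]

lemma wInner_one_one : wInner (1 : MvPolynomial E ℂ) 1 = 1 := by
  have := wInner_monomial (0 : E →₀ ℕ) 0 (1 : ℂ) 1
  simpa [W, MvPolynomial.monomial_zero'] using this

lemma W_add_single (α : E →₀ ℕ) (e : E) :
    W (α + Finsupp.single e 1) = ((α e : ℂ) + 1) * W α := by
  classical
  have happ : ∀ x, (α + Finsupp.single e 1 : E →₀ ℕ) x = α x + Finsupp.single e 1 x :=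
    fun x => Finsupp.add_apply α (Finsupp.single e 1) x
  have hsupp : (α + Finsupp.single e 1).support = insert e α.support := by
    ext x
    simp only [Finsupp.mem_support_iff, Finset.mem_insert, happ, Finsupp.single_apply]
    by_cases hx : x = e
    · subst hx; simp
    · simp [hx, Ne.symm hx]
  rw [W, hsupp]
  have hone : ∀ x ∈ α.support.erase e, ((((α + Finsupp.single e 1 : E →₀ ℕ) x).factorial : ℂ))
      = (((α x).factorial : ℂ)) := by
    intro x hx
    have hne : x ≠ e := (Finset.mem_erase.mp hx).1
    rw [happ, Finsupp.single_apply, if_neg (Ne.symm hne), add_zero]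
  have hae : (α + Finsupp.single e 1 : E →₀ ℕ) e = α e + 1 := by
    rw [happ, Finsupp.single_apply, if_pos rfl]
  by_cases he : e ∈ α.support
  · rw [Finset.insert_eq_self.mpr he]
    rw [W, ← Finset.mul_prod_erase _ _ he, ← Finset.mul_prod_erase _ _ he, ← mul_assoc]
    rw [Finset.prod_congr rfl hone]
    congr 1
    rw [hae, Nat.factorial_succ]
    push_cast
    ring
  · rw [Finset.prod_insert he, W]
    have hone' : ∀ x ∈ α.support, ((((α + Finsupp.single e 1 : E →₀ ℕ) x).factorial : ℂ))
        = (((α x).factorial : ℂ)) := by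
      intro x hx
      have hne : x ≠ e := fun h => he (h ▸ hx)
      rw [happ, Finsupp.single_apply, if_neg (Ne.symm hne), add_zero]
    rw [Finset.prod_congr rfl hone']
    have h0 : α e = 0 := Finsupp.notMem_support_iff.mp he
    rw [hae, h0]
    norm_num

lemma wInner_X_mul_monomial (e : E) (β γ : E →₀ ℕ) (c d : ℂ) :
    wInner (X e * monomial β c) (monomial γ d)
      = wInner (monomial β c) (pderiv e (monomial γ d)) := by
  classical
  have hXm : (X e * monomial β c : MvPolynomial E ℂ)
      = monomial (β + Finsupp.single e 1) c := by
    rw [MvPolynomial.X, monomial_mul, one_mul, add_comm]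
  rw [hXm, pderiv_monomial, wInner_monomial, wInner_monomial]
  by_cases hγ : γ e = 0
  · have h1 : β + Finsupp.single e 1 ≠ γ := by
      intro h
      have := DFunLike.congr_fun h e
      rw [Finsupp.add_apply, Finsupp.single_eq_same] at this
      omega
    rw [if_neg h1]
    have hz : ((γ e : ℂ)) = 0 := by rw [hγ]; norm_num
    by_cases h2 : β = γ - Finsupp.single e 1
    · rw [if_pos h2, hz]; ring
    · rw [if_neg h2]
  · have key : β + Finsupp.single e 1 = γ ↔ β = γ - Finsupp.single e 1 := by
      constructor
      · rintro rfl
        ext x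
        rw [Finsupp.tsub_apply, Finsupp.add_apply]
        omega
      · rintro rfl
        ext x
        rw [Finsupp.add_apply, Finsupp.tsub_apply]
        by_cases hx : x = e
        · subst hx
          rw [Finsupp.single_eq_same]
          omega
        · rw [Finsupp.single_eq_of_ne' (Ne.symm hx)]
          omega
    by_cases h2 : β = γ - Finsupp.single e 1
    · rw [if_pos (key.mpr h2), if_pos h2, W_add_single]
      have hb : β e + 1 = γ e := by
        rw [h2, Finsupp.tsub_apply, Finsupp.single_eq_same]
        omega
      have hβe : (β e : ℂ) + 1 = (γ e : ℂ) := by exact_mod_cast congrArg (Nat.cast : ℕ → ℂ) hb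
      rw [hβe]; ring
    · rw [if_neg (fun h => h2 (key.mp h)), if_neg h2]

lemma wInner_X_mul (e : E) (p q : MvPolynomial E ℂ) :
    wInner (X e * p) q = wInner p (pderiv e q) := by
  classical
  conv_lhs => rw [p.as_sum, q.as_sum]
  conv_rhs => rw [p.as_sum, q.as_sum]
  rw [Finset.mul_sum, wInner_sum_left, wInner_sum_left]
  refine Finset.sum_congr rfl fun β _ => ?_
  rw [wInner_sum_right, map_sum, wInner_sum_right]
  exact Finset.sum_congr rfl fun γ _ => wInner_X_mul_monomial e β γ _ _

end WAux

section Lin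
variable {E : Type*} [Fintype E] [DecidableEq E] {ι : Type*} [DecidableEq ι]

noncomputable def lin (c : ι → E → ℂ) (f : ι) : MvPolynomial E ℂ :=
  ∑ e : E, c f e • X e

noncomputable def ip (c : ι → E → ℂ) (f g : ι) : ℂ := ∑ e : E, c f e * c g e

lemma pderiv_lin (c : ι → E → ℂ) (f : ι) (e : E) :
    pderiv e (lin c f) = MvPolynomial.C (c f e) := by
  rw [lin, map_sum]
  rw [Finset.sum_eq_single e]
  · rw [Derivation.map_smul, pderiv_X, Pi.single_eq_same, smul_eq_C_mul, mul_one]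
  · intro e' _ hne
    rw [Derivation.map_smul, pderiv_X, Pi.single_eq_of_ne hne, smul_zero]
  · intro h; exact absurd (Finset.mem_univ e) h

lemma D_prod (c : ι → E → ℂ) (f : ι) (T : Finset ι) :
    (∑ e : E, c f e • pderiv e (∏ g ∈ T, lin c g))
      = ∑ g ∈ T, ip c f g • ∏ h ∈ T.erase g, lin c h := by
  induction T using Finset.induction_on with
  | empty => simp
  | @insert a T' ha ih =>
    rw [Finset.prod_insert ha]
    have expand : ∀ e : E, c f e • pderiv e (lin c a * ∏ g ∈ T', lin c g)
        = (c f e * c a e) • ∏ g ∈ T', lin c g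
          + lin c a * (c f e • pderiv e (∏ g ∈ T', lin c g)) := by
      intro e
      rw [pderiv_mul, pderiv_lin, smul_add]
      congr 1
      · rw [smul_eq_C_mul, smul_eq_C_mul, map_mul]; ring
      · rw [mul_smul_comm]
    rw [Finset.sum_congr rfl fun e _ => expand e, Finset.sum_add_distrib,
      ← Finset.mul_sum, ih]
    have h1 : (∑ e : E, (c f e * c a e) • ∏ g ∈ T', lin c g)
        = ip c f a • ∏ g ∈ T', lin c g := by
      rw [← Finset.sum_smul, ip]
    rw [h1, Finset.sum_insert ha, Finset.erase_insert ha, Finset.mul_sum]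
    congr 1
    refine Finset.sum_congr rfl fun g hg => ?_
    have hag : a ≠ g := fun h => ha (h ▸ hg)
    rw [Finset.erase_insert_of_ne hag, Finset.prod_insert
      (fun h => ha (Finset.erase_subset _ _ h)), mul_smul_comm]

lemma wInner_lin_mul (c : ι → E → ℂ) (hreal : ∀ f e, (starRingEnd ℂ) (c f e) = c f e)
    (f : ι) (p q : MvPolynomial E ℂ) :
    wInner (lin c f * p) q = wInner p (∑ e : E, c f e • pderiv e q) := by
  have h1 : lin c f * p = ∑ e : E, c f e • (X e * p) := by
    rw [lin, Finset.sum_mul]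
    exact Finset.sum_congr rfl fun e _ => smul_mul_assoc _ _ _
  rw [h1, WAux.wInner_sum_left, WAux.wInner_sum_right]
  refine Finset.sum_congr rfl fun e _ => ?_
  rw [WAux.wInner_smul_left, hreal, WAux.wInner_smul_right, WAux.wInner_X_mul]

lemma wInner_step (c : ι → E → ℂ) (hreal : ∀ f e, (starRingEnd ℂ) (c f e) = c f e)
    {S T : Finset ι} {f₀ : ι} (hf₀ : f₀ ∈ S) :
    wInner (∏ f ∈ S, lin c f) (∏ g ∈ T, lin c g)
      = ∑ g ∈ T, ip c f₀ g *
          wInner (∏ f ∈ S.erase f₀, lin c f) (∏ h ∈ T.erase g, lin c h) := by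
  rw [← Finset.mul_prod_erase S _ hf₀, wInner_lin_mul c hreal, D_prod,
    WAux.wInner_sum_right]
  exact Finset.sum_congr rfl fun g _ => WAux.wInner_smul_right _ _ _

lemma wInner_bound (c : ι → E → ℂ) (hreal : ∀ f e, (starRingEnd ℂ) (c f e) = c f e)
    (C0 : ℝ) (hC0 : 0 ≤ C0) :
    ∀ (n : ℕ) (S T : Finset ι), S.card = n → T.card = n →
    (∀ f ∈ S, ∀ g ∈ T, ‖ip c f g‖ ≤ 1) →
    (∀ f ∈ S, ((T.filter fun g => ip c f g ≠ 0).card : ℝ) ≤ C0) →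
    ‖wInner (∏ f ∈ S, lin c f) (∏ g ∈ T, lin c g)‖ ≤ C0 ^ n := by
  intro n
  induction n with
  | zero =>
    intro S T hS hT _ _
    rw [Finset.card_eq_zero.mp hS, Finset.card_eq_zero.mp hT]
    simp [WAux.wInner_one_one]
  | succ n ih =>
    intro S T hS hT hip hcount
    obtain ⟨f₀, hf₀⟩ := Finset.card_pos.mp (show 0 < S.card by omega)
    rw [wInner_step c hreal hf₀]
    calc ‖∑ g ∈ T, ip c f₀ g *
            wInner (∏ f ∈ S.erase f₀, lin c f) (∏ h ∈ T.erase g, lin c h)‖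
        ≤ ∑ g ∈ T, ‖ip c f₀ g *
            wInner (∏ f ∈ S.erase f₀, lin c f) (∏ h ∈ T.erase g, lin c h)‖ :=
          norm_sum_le _ _
      _ = ∑ g ∈ T.filter (fun g => ip c f₀ g ≠ 0), ‖ip c f₀ g *
            wInner (∏ f ∈ S.erase f₀, lin c f) (∏ h ∈ T.erase g, lin c h)‖ := by
          refine (Finset.sum_filter_of_ne fun g _ habs => ?_).symm
          intro h0
          rw [h0] at habs
          simp at habs
      _ ≤ ∑ g ∈ T.filter (fun g => ip c f₀ g ≠ 0), C0 ^ n := by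
          refine Finset.sum_le_sum fun g hg => ?_
          have hgT : g ∈ T := (Finset.mem_filter.mp hg).1
          rw [norm_mul]
          have h1 : ‖ip c f₀ g‖ ≤ 1 := hip f₀ hf₀ g hgT
          have h2 : ‖wInner (∏ f ∈ S.erase f₀, lin c f)
              (∏ h ∈ T.erase g, lin c h)‖ ≤ C0 ^ n := by
            refine ih (S.erase f₀) (T.erase g) ?_ ?_ ?_ ?_
            · rw [Finset.card_erase_of_mem hf₀, hS]; omega
            · rw [Finset.card_erase_of_mem hgT, hT]; omega
            · intro f hf g' hg'
              exact hip f (Finset.mem_of_mem_erase hf) g' (Finset.mem_of_mem_erase hg')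
            · intro f hf
              refine le_trans ?_ (hcount f (Finset.mem_of_mem_erase hf))
              exact_mod_cast Finset.card_le_card
                (Finset.filter_subset_filter _ (Finset.erase_subset _ _))
          calc ‖ip c f₀ g‖ * _ ≤ 1 * (C0 ^ n) :=
                mul_le_mul h1 h2 (norm_nonneg _) zero_le_one
            _ = C0 ^ n := one_mul _
      _ ≤ C0 * C0 ^ n := by
          rw [Finset.sum_const, nsmul_eq_mul]
          exact mul_le_mul_of_nonneg_right (hcount f₀ hf₀) (pow_nonneg hC0 n)
      _ = C0 ^ (n + 1) := (pow_succ' C0 n).symm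

end Lin

section Faces
variable {L : ℕ}

lemma colAdj_mem (f g : ColFace L) (h : colAdj f g) :
    g ∈ ({(f.1, f.2 + 1), (f.1, f.2 - 1), (f.1 + 1, f.2), (f.1 - 1, f.2)} :
      Finset (ColFace L)) := by
  simp only [Finset.mem_insert, Finset.mem_singleton]
  rcases h with ⟨h1, h2 | h2⟩ | ⟨h1, h2 | h2⟩
  · exact Or.inl (Prod.ext h1.symm h2)
  · exact Or.inr (Or.inl (Prod.ext h1.symm (eq_sub_of_add_eq h2.symm)))
  · exact Or.inr (Or.inr (Or.inl (Prod.ext h2 h1.symm)))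
  · exact Or.inr (Or.inr (Or.inr (Prod.ext (eq_sub_of_add_eq h2.symm) h1.symm)))

lemma adjCard4 (f : ColFace L) (T : Finset (ColFace L)) :
    (T.filter fun g => colAdj f g).card ≤ 4 := by
  have hsub : (T.filter fun g => colAdj f g) ⊆
      ({(f.1, f.2 + 1), (f.1, f.2 - 1), (f.1 + 1, f.2), (f.1 - 1, f.2)} :
        Finset (ColFace L)) :=
    fun g hg => colAdj_mem f g (Finset.mem_filter.mp hg).2
  have h0 := Finset.card_le_card hsub
  have h1 := Finset.card_insert_le ((f.1, f.2 + 1) : ColFace L)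
    ({(f.1, f.2 - 1), (f.1 + 1, f.2), (f.1 - 1, f.2)} : Finset (ColFace L))
  have h2 := Finset.card_insert_le ((f.1, f.2 - 1) : ColFace L)
    ({(f.1 + 1, f.2), (f.1 - 1, f.2)} : Finset (ColFace L))
  have h3 := Finset.card_insert_le ((f.1 + 1, f.2) : ColFace L)
    ({(f.1 - 1, f.2)} : Finset (ColFace L))
  have h4 : ({((f.1 - 1 : ZMod L), f.2)} : Finset (ColFace L)).card = 1 :=
    Finset.card_singleton _
  omega

lemma adjCard3 (f : ColFace 2) (T : Finset (ColFace 2)) :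
    (T.filter fun g => colAdj f g).card ≤ 3 := by
  have hz : ∀ a : ZMod 2, a - 1 = a + 1 := by decide
  have hsub : (T.filter fun g => colAdj f g) ⊆
      ({(f.1, f.2 + 1), (f.1, f.2 - 1), (f.1 + 1, f.2)} : Finset (ColFace 2)) := by
    intro g hg
    have := colAdj_mem f g (Finset.mem_filter.mp hg).2
    simp only [Finset.mem_insert, Finset.mem_singleton] at this ⊢
    rcases this with h | h | h | h
    · exact Or.inl h
    · exact Or.inr (Or.inl h)
    · exact Or.inr (Or.inr h)
    · rw [hz f.1] at h
      exact Or.inr (Or.inr h)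
  have h0 := Finset.card_le_card hsub
  have h1 := Finset.card_insert_le ((f.1, f.2 + 1) : ColFace 2)
    ({(f.1, f.2 - 1), (f.1 + 1, f.2)} : Finset (ColFace 2))
  have h2 := Finset.card_insert_le ((f.1, f.2 - 1) : ColFace 2)
    ({(f.1 + 1, f.2)} : Finset (ColFace 2))
  have h3 : ({((f.1 + 1 : ZMod 2), f.2)} : Finset (ColFace 2)).card = 1 :=
    Finset.card_singleton _
  omega

lemma upFace_shift (f : ColFace L) : upFace f ↔ ¬ upFace (f.1, f.2 + 1) := by
  have hj : ∀ j : ZMod 4, ((j = 0 ∨ j = 2) ↔ ¬(j + 1 = 0 ∨ j + 1 = 2))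
      ∧ ((j = 1 ∨ j = 3) ↔ ¬(j + 1 = 1 ∨ j + 1 = 3)) := by decide
  rcases Nat.even_or_odd f.1.val with h | h
  · have h' : ¬ Odd f.1.val := Nat.not_odd_iff_even.mpr h
    simp only [upFace, h, h', false_and, true_and, false_or, or_false]
    have := (hj f.2).2
    tauto
  · have h' : ¬ Even f.1.val := Nat.not_even_iff_odd.mpr h
    simp only [upFace, h, h', false_and, true_and, false_or, or_false]
    have := (hj f.2).1
    tauto

lemma card_up_eq_down [NeZero L] :
    (Finset.univ.filter (fun f : ColFace L => upFace f)).card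
      = (Finset.univ.filter (fun f : ColFace L => ¬ upFace f)).card := by
  refine Finset.card_bij' (fun f _ => (f.1, f.2 + 1)) (fun g _ => (g.1, g.2 - 1))
    ?_ ?_ ?_ ?_
  · intro f hf
    simp only [Finset.mem_filter, Finset.mem_univ, true_and] at hf ⊢
    exact (upFace_shift f).mp hf
  · intro g hg
    simp only [Finset.mem_filter, Finset.mem_univ, true_and] at hg ⊢
    have h := upFace_shift ((g.1, g.2 - 1) : ColFace L)
    have he : ((g.2 - 1 : ZMod 4) + 1) = g.2 := by ring
    rw [he] at h
    exact h.mpr hg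
  · intro f _
    have : (f.2 + 1 - 1 : ZMod 4) = f.2 := by ring
    exact Prod.ext rfl this
  · intro g _
    have : (g.2 - 1 + 1 : ZMod 4) = g.2 := by ring
    exact Prod.ext rfl this

lemma card_up [NeZero L] :
    (Finset.univ.filter (fun f : ColFace L => upFace f)).card = 2 * L ∧
    (Finset.univ.filter (fun f : ColFace L => ¬ upFace f)).card = 2 * L := by
  have htot := Finset.card_filter_add_card_filter_not
    (s := (Finset.univ : Finset (ColFace L))) (fun f => upFace f)
  have hcard : (Finset.univ : Finset (ColFace L)).card = L * 4 := by
    rw [Finset.card_univ, Fintype.card_prod, ZMod.card, ZMod.card]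
  have heq := card_up_eq_down (L := L)
  omega

end Faces

theorem column_overlap_bound' {E : Type*} [Fintype E] [DecidableEq E]
    (L : ℕ) [NeZero L] (hL : Even L) (hL2 : 2 ≤ L)
    (σ : ColFace L → E → ℤ)
    (hval : ∀ f e, σ f e = -1 ∨ σ f e = 0 ∨ σ f e = 1)
    (hsupp : ∀ f, ({e | σ f e ≠ 0} : Set E).ncard = 4)
    (hcomm : ∀ f g : ColFace L, (∑ e : E, σ f e * σ g e) =
      if f = g then 4 else if colAdj f g then -1 else 0) :
    ‖wInner (downState σ) (upState σ)‖ ≤ 4 ^ (2 * L) ∧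
    (L = 2 → ‖wInner (downState σ) (upState σ)‖ ≤ 3 ^ (2 * L)) ∧
    (3 : ℝ) ^ (2 * L) < 4 ^ (2 * L) := by
  have key : ∀ (M : ℕ) (inst : NeZero M) (τ : ColFace M → E → ℤ)
      (hcm : ∀ f g : ColFace M, (∑ e : E, τ f e * τ g e) =
        if f = g then 4 else if colAdj f g then -1 else 0)
      (C0 : ℝ) (hC0 : (0:ℝ) ≤ C0)
      (hadj : ∀ (f : ColFace M) (T : Finset (ColFace M)),
        ((T.filter fun g => colAdj f g).card : ℝ) ≤ C0),
      ‖wInner (downState τ) (upState τ)‖ ≤ C0 ^ (2 * M) := by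
    intro M instM τ hcm C0 hC0 hadj
    set c : ColFace M → E → ℂ := fun f e => ((τ f e : ℤ) : ℂ) with hcdef
    have hreal : ∀ f e, (starRingEnd ℂ) (c f e) = c f e := fun f e => map_intCast _ _
    set S := Finset.univ.filter (fun f : ColFace M => ¬ upFace f) with hS
    set T := Finset.univ.filter (fun f : ColFace M => upFace f) with hT
    have hdown : downState τ = ∏ f ∈ S, lin c f := by
      rw [downState]
      exact Finset.prod_congr rfl fun f _ => rfl
    have hup : upState τ = ∏ g ∈ T, lin c g := by
      rw [upState]
      exact Finset.prod_congr rfl fun f _ => rfl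
    have hipval : ∀ f g : ColFace M, ip c f g =
        (((if f = g then 4 else if colAdj f g then -1 else 0 : ℤ)) : ℂ) := by
      intro f g
      rw [← hcm f g, ip]
      push_cast [hcdef]
      rfl
    have hfg : ∀ f ∈ S, ∀ g ∈ T, f ≠ g := by
      intro f hf g hg h
      rw [hS, Finset.mem_filter] at hf
      rw [hT, Finset.mem_filter] at hg
      exact hf.2 (h ▸ hg.2)
    have habs1 : ∀ f ∈ S, ∀ g ∈ T, ‖ip c f g‖ ≤ 1 := by
      intro f hf g hg
      rw [hipval, if_neg (hfg f hf g hg)]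
      split_ifs
      · norm_num
      · norm_num
    have hcount : ∀ f ∈ S, ((T.filter fun g => ip c f g ≠ 0).card : ℝ) ≤ C0 := by
      intro f hf
      refine le_trans ?_ (hadj f T)
      have hsub : (T.filter fun g => ip c f g ≠ 0) ⊆ (T.filter fun g => colAdj f g) := by
        intro g hg
        rw [Finset.mem_filter] at hg ⊢
        refine ⟨hg.1, ?_⟩
        by_contra hna
        apply hg.2
        rw [hipval, if_neg (hfg f hf g hg.1), if_neg hna]
        norm_num
      exact_mod_cast Finset.card_le_card hsub
    have hcards := card_up (L := M)
    rw [hdown, hup]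
    exact wInner_bound c hreal C0 hC0 (2 * M) S T hcards.2 hcards.1 habs1 hcount
  refine ⟨?_, ?_, ?_⟩
  · exact key L ‹_› σ hcomm 4 (by norm_num) (fun f T => by exact_mod_cast adjCard4 f T)
  · intro h2
    subst h2
    exact key 2 ‹_› σ hcomm 3 (by norm_num) (fun f T => by exact_mod_cast adjCard3 f T)
  · refine pow_lt_pow_left₀ (by norm_num) (by norm_num) (by omega)

/-- Counting full Wick contractions in the overlap `⟨↓|↑⟩` for a rotated
closed column of length `L₁ ≥ 2` (`L₁` even): each of the `2L₁` annihilation operators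
can only be contracted with the (at most 4) creation operators of adjacent faces, each
contraction contributing `-1`, so `|⟨↓|↑⟩| ≤ 4^(2L₁)`; moreover for `L₁ = 2` each face
has only 3 adjacent faces among the created ones, so `|⟨↓|↑⟩| ≤ 3^(2L₁) < 4^(2L₁)`. -/
theorem column_overlap_bound {E : Type*} [Fintype E] [DecidableEq E]
    (L : ℕ) [NeZero L] (hL : Even L) (hL2 : 2 ≤ L)
    (σ : ColFace L → E → ℤ)
    (hval : ∀ f e, σ f e = -1 ∨ σ f e = 0 ∨ σ f e = 1)
    (hsupp : ∀ f, ({e | σ f e ≠ 0} : Set E).ncard = 4)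
    (hcomm : ∀ f g : ColFace L, (∑ e : E, σ f e * σ g e) =
      if f = g then 4 else if colAdj f g then -1 else 0) :
    ‖wInner (downState σ) (upState σ)‖ ≤ 4 ^ (2 * L) ∧
    (L = 2 → ‖wInner (downState σ) (upState σ)‖ ≤ 3 ^ (2 * L)) ∧
    (3 : ℝ) ^ (2 * L) < 4 ^ (2 * L) := by
  exact column_overlap_bound' L hL hL2 σ hval hsupp hcomm
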